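/- Let R be a commutative ring of characteristic p. Define the mixed ring mix(R) = (R, R, id, fr) where fr is the Frobenius. Then mix(R) descends to a twisted ring (i.e., admits a twisted descent datum) if and only if R admits a ring automorphism ψ with ψ ∘ ψ = fr. In particular, if fr is not bijective on R, then mix(R) admits no twisted descent datum. -/

import Mathlib

/-- The mixed ring `mix(R) = (R, R, id, fr)` admits a twisted descent datum if and
only if `R` admits a ring automorphism `ψ` with `ψ² = fr`; in particular, if the
Frobenius of `R` is not bijective, there is no twisted descent datum. -/
theorem stmt_16 (p : ℕ) [Fact p.Prime] (R : Type*) [CommRing R] [CharP R p] :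
    ((∃ f₁ f₂ : R →+* R,
        (∀ x, f₂ (f₁ x) = x) ∧ (∀ x, f₁ (f₂ x) = x) ∧
        (∀ x, f₁ (x ^ p) = f₂ x) ∧ (∀ x, f₂ x = (f₁ x) ^ p)) ↔
      (∃ ψ : R ≃+* R, ∀ x, ψ (ψ x) = x ^ p)) ∧
    (¬ Function.Bijective (fun x : R => x ^ p) →
      ¬ ∃ f₁ f₂ : R →+* R,
        (∀ x, f₂ (f₁ x) = x) ∧ (∀ x, f₁ (f₂ x) = x) ∧
        (∀ x, f₁ (x ^ p) = f₂ x) ∧ (∀ x, f₂ x = (f₁ x) ^ p)) := by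
  have main : (∃ f₁ f₂ : R →+* R,
        (∀ x, f₂ (f₁ x) = x) ∧ (∀ x, f₁ (f₂ x) = x) ∧
        (∀ x, f₁ (x ^ p) = f₂ x) ∧ (∀ x, f₂ x = (f₁ x) ^ p)) ↔
      (∃ ψ : R ≃+* R, ∀ x, ψ (ψ x) = x ^ p) := by
    constructor
    · rintro ⟨f₁, f₂, h21, h12, h3, h4⟩
      refine ⟨RingEquiv.ofRingHom f₂ f₁ (by ext x; exact h21 x) (by ext x; exact h12 x), ?_⟩
      intro x
      show f₂ (f₂ x) = x ^ p
      rw [h4 x, map_pow, h21]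
    · rintro ⟨ψ, hψ⟩
      refine ⟨(ψ.symm : R →+* R), (ψ : R →+* R), fun x => ψ.apply_symm_apply x,
        fun x => ψ.symm_apply_apply x, ?_, ?_⟩
      · intro x
        show ψ.symm (x ^ p) = ψ x
        rw [← hψ x, ψ.symm_apply_apply]
      · intro x
        show ψ x = (ψ.symm x) ^ p
        rw [← hψ (ψ.symm x), ψ.apply_symm_apply]
  refine ⟨main, fun hnb h => hnb ?_⟩
  obtain ⟨ψ, hψ⟩ := main.mp h
  have : (fun x : R => x ^ p) = ψ ∘ ψ := by funext x; exact (hψ x).symm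
  rw [this]
  exact ψ.bijective.comp ψ.bijective
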